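/- Fix a positive integer n and real β > 0. Let A_n be the n×n tridiagonal matrix with diagonal −k², subdiagonal k(k+n)/2, superdiagonal k(k−n)/2, and B_n diagonal with entries k. Define s_0 = −((n+1)/2) A_n^{−1} e_n (where e_n = (1,0,…,0)^T) and s_k = i (k I − (4/β) A_n)^{−1} B_n s_{k−1} for k ≥ 1. Then all matrices k I − (4/β)A_n (k ≥ 1) are invertible, s_0 = (1,1,…,1)^T, and there exists κ > 0 such that ‖s_k‖ ≤ κ^k ∏_{j=1}^k n/(j + 4n/β) for all k ≥ 0; in particular the power series ∑_{k≥0} s_k λ^k has infinite radius of convergence. -/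

import Mathlib

open Finset Matrix

/-- The tridiagonal matrix `A_n` (complex entries) with `[A_n]_{k,k} = -k²`,
`[A_n]_{k,k-1} = k(k+n)/2`, `[A_n]_{k,k+1} = k(k-n)/2`, indices `1,…,n` on `Fin n`. -/
noncomputable def AmatC (n : ℕ) : Matrix (Fin n) (Fin n) ℂ :=
  fun i j =>
    if (i : ℕ) = (j : ℕ) then -(((i : ℕ) + 1 : ℂ) ^ 2)
    else if (i : ℕ) = (j : ℕ) + 1 then (((i : ℕ) + 1 : ℂ) * (((i : ℕ) + 1) + n)) / 2
    else if (j : ℕ) = (i : ℕ) + 1 then (((i : ℕ) + 1 : ℂ) * (((i : ℕ) + 1 : ℂ) - n)) / 2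
    else 0

/-- Diagonal matrix `B_n` with `[B_n]_{kk} = k` (complex entries). -/
noncomputable def BmatC (n : ℕ) : Matrix (Fin n) (Fin n) ℂ :=
  Matrix.diagonal (fun k : Fin n => ((k : ℕ) + 1 : ℂ))

/-- First coordinate vector `e_n = (1,0,…,0)`. -/
noncomputable def evecC (n : ℕ) : Fin n → ℂ := fun k => if (k : ℕ) = 0 then 1 else 0

/-- weights -/
noncomputable def wt (n : ℕ) : ℕ → ℝ
  | 0 => 1
  | (i+1) => wt n i * (((i:ℝ)+1) * ((n:ℝ) - ((i:ℝ)+1)) / (((i:ℝ)+2) * ((n:ℝ) + (i:ℝ)+2)))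

lemma wt_pos (n : ℕ) : ∀ i, i < n → 0 < wt n i := by
  intro i
  induction i with
  | zero => intro _; simp [wt]
  | succ i ih =>
    intro hi
    have h1 : 0 < wt n i := ih (by omega)
    have h2 : ((i:ℝ)+1) < (n:ℝ) := by exact_mod_cast hi
    rw [wt]
    apply mul_pos h1
    apply div_pos
    · nlinarith
    · positivity

lemma wt_rec (n : ℕ) (j : ℕ) (hn : 0 < n) :
    wt n (j+1) * (((j:ℝ)+2) * ((n:ℝ) + (j:ℝ)+2)) = wt n j * (((j:ℝ)+1) * ((n:ℝ) - ((j:ℝ)+1))) := by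
  have h1 : ((j:ℝ)+2) ≠ 0 := by positivity
  have h2 : ((n:ℝ) + (j:ℝ)+2) ≠ 0 := by positivity
  rw [wt]
  field_simp

lemma wt_cancel (n : ℕ) (hn : 0 < n) (j : ℕ) :
    wt n (j+1) * (((j:ℝ)+2) * ((n:ℝ) + (j:ℝ)+2)) + wt n j * (((j:ℝ)+1) * (((j:ℝ)+1) - (n:ℝ))) = 0 := by
  have := wt_rec n j hn
  nlinarith [this]

lemma amat_real (n : ℕ) (i j : Fin n) : (starRingEnd ℂ) (AmatC n i j) = AmatC n i j := by
  unfold AmatC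
  split_ifs <;> simp [map_ofNat]

lemma sym_entry (n : ℕ) (hn : 0 < n) (t c : ℝ) (i j : Fin n) :
    (wt n i : ℂ) * (((t:ℂ) • (1 : Matrix (Fin n) (Fin n) ℂ) - (c:ℂ) • AmatC n) i j)
      + (wt n j : ℂ) * (((t:ℂ) • (1 : Matrix (Fin n) (Fin n) ℂ) - (c:ℂ) • AmatC n) j i)
    = if i = j then ((2 * wt n i * (t + c*(((i:ℕ):ℝ)+1)^2) : ℝ) : ℂ) else 0 := by
  simp only [Matrix.sub_apply, Matrix.smul_apply, Matrix.one_apply, AmatC, smul_eq_mul]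
  rcases eq_or_ne i j with hij | hij
  · subst hij
    simp only [if_pos rfl]
    push_cast
    ring
  · have hvij : (i:ℕ) ≠ (j:ℕ) := fun h => hij (Fin.ext h)
    simp only [if_neg hij, if_neg (Ne.symm hij), if_neg hvij, if_neg (Ne.symm hvij)]
    rcases eq_or_ne (i:ℕ) ((j:ℕ)+1) with h1 | h1
    · have h2 : ¬ ((j:ℕ) = (i:ℕ)+1) := by omega
      simp only [if_pos h1, if_neg h2]
      have key := wt_cancel n hn (j:ℕ)
      have ckey : ((wt n ((j:ℕ)+1) * (((j:ℝ)+2) * ((n:ℝ) + (j:ℝ)+2))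
          + wt n (j:ℕ) * (((j:ℝ)+1) * (((j:ℝ)+1) - (n:ℝ))) : ℝ) : ℂ) = 0 := by
        rw [key]; norm_num
      rw [h1]
      push_cast at ckey ⊢
      linear_combination (-(c:ℂ)/2) * ckey
    · rcases eq_or_ne (j:ℕ) ((i:ℕ)+1) with h2 | h2
      · simp only [if_pos h2, if_neg h1]
        have key := wt_cancel n hn (i:ℕ)
        have ckey : ((wt n ((i:ℕ)+1) * (((i:ℝ)+2) * ((n:ℝ) + (i:ℝ)+2))
            + wt n (i:ℕ) * (((i:ℝ)+1) * (((i:ℝ)+1) - (n:ℝ))) : ℝ) : ℂ) = 0 := by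
          rw [key]; norm_num
        rw [h2]
        push_cast at ckey ⊢
        linear_combination (-(c:ℂ)/2) * ckey
      · simp only [if_neg h1, if_neg h2]
        ring

lemma quad (n : ℕ) (hn : 0 < n) (t c : ℝ) (v : Fin n → ℂ) :
    (∑ i : Fin n, (wt n i : ℂ) * (starRingEnd ℂ) (v i)
        * (((t:ℂ) • (1 : Matrix (Fin n) (Fin n) ℂ) - (c:ℂ) • AmatC n).mulVec v i))
      + (starRingEnd ℂ) (∑ i : Fin n, (wt n i : ℂ) * (starRingEnd ℂ) (v i)
        * (((t:ℂ) • (1 : Matrix (Fin n) (Fin n) ℂ) - (c:ℂ) • AmatC n).mulVec v i))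
    = ((∑ i : Fin n, 2 * wt n i * (t + c*(((i:ℕ):ℝ)+1)^2) * Complex.normSq (v i) : ℝ) : ℂ) := by
  set M : Matrix (Fin n) (Fin n) ℂ := (t:ℂ) • (1 : Matrix (Fin n) (Fin n) ℂ) - (c:ℂ) • AmatC n with hMdef
  have hM : ∀ i j, (starRingEnd ℂ) (M i j) = M i j := by
    intro i j
    simp only [hMdef, Matrix.sub_apply, Matrix.smul_apply, Matrix.one_apply, smul_eq_mul,
      map_sub, _root_.map_mul, Complex.conj_ofReal, amat_real]
    split_ifs <;> simp [amat_real]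
  have e1 : (∑ i : Fin n, (wt n i : ℂ) * (starRingEnd ℂ) (v i) * (M.mulVec v i))
      = ∑ i : Fin n, ∑ j : Fin n, (wt n i : ℂ) * (starRingEnd ℂ) (v i) * (M i j * v j) := by
    simp only [Matrix.mulVec, dotProduct, Finset.mul_sum]
  have e2 : (starRingEnd ℂ) (∑ i : Fin n, (wt n i : ℂ) * (starRingEnd ℂ) (v i) * (M.mulVec v i))
      = ∑ i : Fin n, ∑ j : Fin n, (wt n j : ℂ) * (M j i) * ((starRingEnd ℂ) (v i) * v j) := by
    rw [e1, map_sum]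
    simp only [map_sum, _root_.map_mul, Complex.conj_conj, Complex.conj_ofReal, hM]
    rw [Finset.sum_comm]
    refine Finset.sum_congr rfl fun i _ => Finset.sum_congr rfl fun j _ => by ring
  rw [e2, e1, ← Finset.sum_add_distrib]
  have e3 : ∀ i : Fin n,
      (∑ j : Fin n, (wt n i : ℂ) * (starRingEnd ℂ) (v i) * (M i j * v j))
        + (∑ j : Fin n, (wt n j : ℂ) * (M j i) * ((starRingEnd ℂ) (v i) * v j))
      = ∑ j : Fin n, ((wt n i : ℂ) * M i j + (wt n j : ℂ) * M j i) * ((starRingEnd ℂ) (v i) * v j) := by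
    intro i
    rw [← Finset.sum_add_distrib]
    refine Finset.sum_congr rfl fun j _ => by ring
  simp only [e3]
  have e4 : ∀ i : Fin n,
      (∑ j : Fin n, ((wt n i : ℂ) * M i j + (wt n j : ℂ) * M j i) * ((starRingEnd ℂ) (v i) * v j))
      = ((2 * wt n i * (t + c*(((i:ℕ):ℝ)+1)^2) : ℝ) : ℂ) * ((starRingEnd ℂ) (v i) * v i) := by
    intro i
    have : ∀ j : Fin n,
        ((wt n i : ℂ) * M i j + (wt n j : ℂ) * M j i) * ((starRingEnd ℂ) (v i) * v j)
        = if i = j then ((2 * wt n i * (t + c*(((i:ℕ):ℝ)+1)^2) : ℝ) : ℂ)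
            * ((starRingEnd ℂ) (v i) * v j) else 0 := by
      intro j
      rw [sym_entry n hn t c i j]
      split_ifs with h <;> simp
    simp only [this]
    rw [Finset.sum_ite_eq]
    simp
  simp only [e4]
  rw [Complex.ofReal_sum]
  refine Finset.sum_congr rfl fun i _ => ?_
  push_cast
  rw [← Complex.mul_conj]
  ring

noncomputable def Nw (n : ℕ) (v : Fin n → ℂ) : ℝ :=
  Real.sqrt (∑ i : Fin n, wt n i * Complex.normSq (v i))

lemma Nw_nonneg (n : ℕ) (v : Fin n → ℂ) : 0 ≤ Nw n v := Real.sqrt_nonneg _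

lemma wt_nonneg' (n : ℕ) (i : Fin n) : 0 ≤ wt n (i : ℕ) := (wt_pos n i i.isLt).le

lemma Nw_sum_nonneg (n : ℕ) (v : Fin n → ℂ) :
    0 ≤ ∑ i : Fin n, wt n i * Complex.normSq (v i) :=
  Finset.sum_nonneg fun i _ => mul_nonneg (wt_nonneg' n i) (Complex.normSq_nonneg _)

lemma Nw_sq (n : ℕ) (v : Fin n → ℂ) :
    Nw n v ^ 2 = ∑ i : Fin n, wt n i * Complex.normSq (v i) :=
  Real.sq_sqrt (Nw_sum_nonneg n v)

lemma norm_bound (n : ℕ) (hn : 0 < n) (t c : ℝ) (ht : 0 ≤ t) (hc : 0 < c) (v : Fin n → ℂ) :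
    (t + c) * Nw n v ≤ Nw n (((t:ℂ) • (1 : Matrix (Fin n) (Fin n) ℂ) - (c:ℂ) • AmatC n).mulVec v) := by
  set u : Fin n → ℂ := ((t:ℂ) • (1 : Matrix (Fin n) (Fin n) ℂ) - (c:ℂ) • AmatC n).mulVec v with hu
  set S : ℂ := ∑ i : Fin n, (wt n i : ℂ) * (starRingEnd ℂ) (v i) * u i with hS
  have hq := quad n hn t c v
  rw [← hu, ← hS] at hq
  -- 2 * S.re equals the positive quadratic form
  have hre : 2 * S.re = ∑ i : Fin n, 2 * wt n i * (t + c*(((i:ℕ):ℝ)+1)^2) * Complex.normSq (v i) := by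
    have h2 : S + (starRingEnd ℂ) S = ((2 * S.re : ℝ) : ℂ) := Complex.add_conj S
    rw [h2] at hq
    exact_mod_cast hq
  -- lower bound for quadratic form
  have hlow : 2 * (t + c) * (Nw n v)^2 ≤ 2 * S.re := by
    rw [hre, Nw_sq, Finset.mul_sum]
    refine Finset.sum_le_sum fun i _ => ?_
    have h1 : (1:ℝ) ≤ (((i:ℕ):ℝ)+1)^2 := by nlinarith [(Nat.cast_nonneg (i:ℕ) : (0:ℝ) ≤ (i:ℕ))]
    have hw := wt_nonneg' n i
    have hq2 := Complex.normSq_nonneg (v i)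
    nlinarith [mul_nonneg (mul_nonneg (mul_nonneg hc.le hw) hq2) (sub_nonneg.mpr h1)]
  -- Cauchy-Schwarz upper bound
  have hup : S.re ≤ Nw n v * Nw n u := by
    have h1 : S.re ≤ ‖S‖ := Complex.re_le_norm S
    have h2 : ‖S‖ ≤ ∑ i : Fin n, wt n i * (‖v i‖ * ‖u i‖) := by
      refine (norm_sum_le _ _).trans (Finset.sum_le_sum fun i _ => ?_)
      rw [norm_mul, norm_mul, Complex.norm_real, RCLike.norm_conj]
      rw [Real.norm_eq_abs, abs_of_nonneg (wt_nonneg' n i)]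
      exact le_of_eq (mul_assoc _ _ _)
    have h3 : ∑ i : Fin n, wt n i * (‖v i‖ * ‖u i‖)
        = ∑ i : Fin n, Real.sqrt (wt n i * Complex.normSq (v i))
            * Real.sqrt (wt n i * Complex.normSq (u i)) := by
      refine Finset.sum_congr rfl fun i _ => ?_
      rw [Real.sqrt_mul (wt_nonneg' n i), Real.sqrt_mul (wt_nonneg' n i),
        ← Complex.norm_def, ← Complex.norm_def]
      have hw2 : Real.sqrt (wt n i) * Real.sqrt (wt n i) = wt n i := Real.mul_self_sqrt (wt_nonneg' n i)
      linear_combination (-(‖v i‖ * ‖u i‖)) * hw2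
    have h4 := Real.sum_sqrt_mul_sqrt_le (univ : Finset (Fin n))
      (f := fun (i : Fin n) => wt n i * Complex.normSq (v i)) (g := fun (i : Fin n) => wt n i * Complex.normSq (u i))
      (fun (i : Fin n) => mul_nonneg (wt_nonneg' n i) (Complex.normSq_nonneg _))
      (fun (i : Fin n) => mul_nonneg (wt_nonneg' n i) (Complex.normSq_nonneg _))
    calc S.re ≤ ‖S‖ := h1
      _ ≤ _ := h2
      _ = _ := h3
      _ ≤ _ := h4
  -- conclude
  rcases eq_or_lt_of_le (Nw_nonneg n v) with h0 | h0
  · rw [← h0]; simpa using Nw_nonneg n u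
  · nlinarith [Nw_nonneg n u]

lemma det_ne (n : ℕ) (hn : 0 < n) (t c : ℝ) (ht : 0 ≤ t) (hc : 0 < c) :
    ((t:ℂ) • (1 : Matrix (Fin n) (Fin n) ℂ) - (c:ℂ) • AmatC n).det ≠ 0 := by
  intro hdet
  obtain ⟨v, hv0, hMv⟩ := (Matrix.exists_mulVec_eq_zero_iff).mpr hdet
  apply hv0
  have hq := quad n hn t c v
  rw [hMv] at hq
  simp only [Pi.zero_apply, mul_zero, Finset.sum_const_zero, map_zero, add_zero] at hq
  have hq' : (∑ i : Fin n, 2 * wt n i * (t + c*(((i:ℕ):ℝ)+1)^2) * Complex.normSq (v i)) = 0 := by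
    exact_mod_cast hq.symm
  have hterm : ∀ i ∈ (univ : Finset (Fin n)),
      0 ≤ 2 * wt n (i:ℕ) * (t + c*(((i:ℕ):ℝ)+1)^2) * Complex.normSq (v i) := by
    intro i _
    have hw := wt_nonneg' n i
    have hq2 := Complex.normSq_nonneg (v i)
    have : (0:ℝ) ≤ t + c*(((i:ℕ):ℝ)+1)^2 := by positivity
    positivity
  have hz := (Finset.sum_eq_zero_iff_of_nonneg hterm).mp hq'
  funext i
  have hi := hz i (Finset.mem_univ i)
  have hw := wt_pos n i i.isLt
  have hpos : (0:ℝ) < 2 * wt n (i:ℕ) * (t + c*(((i:ℕ):ℝ)+1)^2) := by positivity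
  have : Complex.normSq (v i) = 0 := by
    by_contra hne
    exact hne (by nlinarith [Complex.normSq_nonneg (v i)])
  simpa using Complex.normSq_eq_zero.mp this

lemma B_bound (n : ℕ) (u : Fin n → ℂ) :
    Nw n ((BmatC n).mulVec u) ≤ n * Nw n u := by
  unfold BmatC Nw
  have h1 : ∀ i : Fin n,
      wt n i * Complex.normSq ((Matrix.diagonal (fun k : Fin n => ((k : ℕ) + 1 : ℂ))).mulVec u i)
      ≤ (n:ℝ)^2 * (wt n i * Complex.normSq (u i)) := by
    intro i
    rw [Matrix.mulVec_diagonal, Complex.normSq_mul]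
    have h2 : Complex.normSq (((i:ℕ):ℂ) + 1) = (((i:ℕ):ℝ)+1)^2 := by
      have : (((i:ℕ):ℂ) + 1) = ((((i:ℕ):ℝ)+1 : ℝ) : ℂ) := by push_cast; ring
      rw [this, Complex.normSq_ofReal]; ring
    rw [h2]
    have h3 : (((i:ℕ):ℝ)+1)^2 ≤ (n:ℝ)^2 := by
      have : ((i:ℕ):ℝ)+1 ≤ (n:ℝ) := by exact_mod_cast i.isLt
      nlinarith [(Nat.cast_nonneg (i:ℕ) : (0:ℝ) ≤ (i:ℕ))]
    have hw := wt_nonneg' n i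
    have hq := Complex.normSq_nonneg (u i)
    nlinarith [mul_nonneg (mul_nonneg hw hq) (sub_nonneg.mpr h3)]
  calc Real.sqrt (∑ i : Fin n, wt n i * Complex.normSq ((Matrix.diagonal (fun k : Fin n => ((k : ℕ) + 1 : ℂ))).mulVec u i))
      ≤ Real.sqrt ((n:ℝ)^2 * ∑ i : Fin n, wt n i * Complex.normSq (u i)) := by
        apply Real.sqrt_le_sqrt
        rw [Finset.mul_sum]
        exact Finset.sum_le_sum fun i _ => h1 i
    _ = n * Real.sqrt (∑ i : Fin n, wt n i * Complex.normSq (u i)) := by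
        rw [Real.sqrt_mul (by positivity), Real.sqrt_sq (by positivity)]

lemma Nw_smul_I (n : ℕ) (x : Fin n → ℂ) : Nw n (Complex.I • x) = Nw n x := by
  unfold Nw
  congr 1
  refine Finset.sum_congr rfl fun i _ => ?_
  rw [Pi.smul_apply, smul_eq_mul, Complex.normSq_mul]
  simp [Complex.normSq_I]

lemma sup_le_Nw (n : ℕ) (hn : 0 < n) (v : Fin n → ℂ) :
    ‖v‖ ≤ ((univ : Finset (Fin n)).sup' (univ_nonempty_iff.mpr ⟨⟨0, hn⟩⟩)
        fun i => (Real.sqrt (wt n i))⁻¹) * Nw n v := by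
  set Cw := (univ : Finset (Fin n)).sup' (univ_nonempty_iff.mpr ⟨⟨0, hn⟩⟩)
      fun i => (Real.sqrt (wt n i))⁻¹ with hCw
  have hCw0 : 0 ≤ Cw := by
    refine le_trans ?_ (Finset.le_sup' _ (Finset.mem_univ ⟨0, hn⟩))
    positivity
  rw [pi_norm_le_iff_of_nonneg (mul_nonneg hCw0 (Nw_nonneg n v))]
  intro i
  have hterm : wt n i * Complex.normSq (v i) ≤ (Nw n v)^2 := by
    rw [Nw_sq]
    exact Finset.single_le_sum (fun j _ => mul_nonneg (wt_nonneg' n j) (Complex.normSq_nonneg _))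
      (Finset.mem_univ i)
  have hwpos := wt_pos n i i.isLt
  have h1 : Real.sqrt (wt n i) * ‖v i‖ ≤ Nw n v := by
    have : Real.sqrt (wt n i * Complex.normSq (v i)) ≤ Nw n v := by
      rw [← Real.sqrt_sq (Nw_nonneg n v)]
      exact Real.sqrt_le_sqrt hterm
    rwa [Real.sqrt_mul (wt_nonneg' n i), ← Complex.norm_def] at this
  have hsq : (0:ℝ) < Real.sqrt (wt n i) := Real.sqrt_pos.mpr hwpos
  have h2 : ‖v i‖ ≤ (Real.sqrt (wt n i))⁻¹ * Nw n v := by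
    rw [← div_eq_inv_mul, le_div_iff₀ hsq]
    linarith [h1]
  refine h2.trans ?_
  have h3 : (Real.sqrt (wt n i))⁻¹ ≤ Cw := by
    rw [hCw]; exact Finset.le_sup' (fun j : Fin n => (Real.sqrt (wt n (j:ℕ)))⁻¹) (Finset.mem_univ i)
  exact mul_le_mul_of_nonneg_right h3 (Nw_nonneg n v)

lemma amat_split (n : ℕ) (i j : Fin n) :
    AmatC n i j =
      (if (i:ℕ) = (j:ℕ) then -(((i : ℕ) + 1 : ℂ) ^ 2) else 0)
      + (if (j:ℕ) + 1 = (i:ℕ) then (((i : ℕ) + 1 : ℂ) * (((i : ℕ) + 1) + n)) / 2 else 0)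
      + (if (j:ℕ) = (i:ℕ) + 1 then (((i : ℕ) + 1 : ℂ) * (((i : ℕ) + 1 : ℂ) - n)) / 2 else 0) := by
  unfold AmatC
  split_ifs <;> first | (exfalso; omega) | ring

lemma amat_ones (n : ℕ) (hn : 0 < n) :
    (AmatC n).mulVec (fun _ => 1) = (-(((n : ℂ) + 1) / 2)) • evecC n := by
  funext i
  have hcalc : (AmatC n).mulVec (fun _ => 1) i = ∑ j : Fin n, AmatC n i j := by
    simp [Matrix.mulVec, dotProduct]
  rw [hcalc]
  simp only [amat_split]
  rw [Finset.sum_add_distrib, Finset.sum_add_distrib]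
  have S1 : (∑ j : Fin n, if (i:ℕ) = (j:ℕ) then -(((i : ℕ) + 1 : ℂ) ^ 2) else 0)
      = -(((i : ℕ) + 1 : ℂ) ^ 2) := by
    have hc : ∀ j : Fin n, ((i:ℕ) = (j:ℕ)) ↔ i = j := fun j => (Fin.ext_iff).symm
    simp only [hc]
    rw [Finset.sum_ite_eq univ i (fun _ => -(((i : ℕ) + 1 : ℂ) ^ 2))]
    simp
  have S2 : (∑ j : Fin n, if (j:ℕ) + 1 = (i:ℕ) then (((i : ℕ) + 1 : ℂ) * (((i : ℕ) + 1) + n)) / 2 else 0)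
      = if 1 ≤ (i:ℕ) then (((i : ℕ) + 1 : ℂ) * (((i : ℕ) + 1) + n)) / 2 else 0 := by
    by_cases h0 : 1 ≤ (i:ℕ)
    · rw [if_pos h0]
      have hlt : (i:ℕ) - 1 < n := by have := i.isLt; omega
      have hc : ∀ j : Fin n, ((j:ℕ) + 1 = (i:ℕ)) ↔ j = ⟨(i:ℕ) - 1, hlt⟩ := by
        intro j; rw [Fin.ext_iff]; simp; omega
      simp only [hc]
      rw [Finset.sum_ite_eq' univ _ (fun _ => (((i : ℕ) + 1 : ℂ) * (((i : ℕ) + 1) + n)) / 2)]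
      simp
    · rw [if_neg h0]
      exact Finset.sum_eq_zero fun j _ => if_neg (by omega)
  have S3 : (∑ j : Fin n, if (j:ℕ) = (i:ℕ) + 1 then (((i : ℕ) + 1 : ℂ) * (((i : ℕ) + 1 : ℂ) - n)) / 2 else 0)
      = if (i:ℕ) + 1 < n then (((i : ℕ) + 1 : ℂ) * (((i : ℕ) + 1 : ℂ) - n)) / 2 else 0 := by
    by_cases h0 : (i:ℕ) + 1 < n
    · rw [if_pos h0]
      have hc : ∀ j : Fin n, ((j:ℕ) = (i:ℕ) + 1) ↔ j = ⟨(i:ℕ) + 1, h0⟩ := by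
        intro j; rw [Fin.ext_iff]
      simp only [hc]
      rw [Finset.sum_ite_eq' univ _ (fun _ => (((i : ℕ) + 1 : ℂ) * (((i : ℕ) + 1 : ℂ) - n)) / 2)]
      simp
    · rw [if_neg h0]
      exact Finset.sum_eq_zero fun j _ => if_neg (by have := j.isLt; omega)
  rw [S1, S2, S3]
  simp only [evecC, Pi.smul_apply, smul_eq_mul]
  by_cases h0 : 1 ≤ (i:ℕ)
  · rw [if_pos h0, if_neg (by omega : ¬ (i:ℕ) = 0)]
    by_cases h1 : (i:ℕ) + 1 < n
    · rw [if_pos h1]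
      push_cast
      ring
    · have hlast : (i:ℕ) + 1 = n := by have := i.isLt; omega
      rw [if_neg h1]
      have hc : ((i:ℕ):ℂ) + 1 = (n:ℂ) := by exact_mod_cast congrArg (Nat.cast : ℕ → ℂ) hlast
      rw [← hc]
      push_cast
      ring
  · have h0' : (i:ℕ) = 0 := by omega
    rw [if_neg h0, if_pos h0', h0']
    by_cases h1 : (i:ℕ) + 1 < n
    · rw [h0'] at h1
      rw [if_pos h1]
      push_cast
      ring
    · have hn1 : n = 1 := by have := i.isLt; omega
      rw [h0'] at h1
      rw [if_neg h1]
      subst hn1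
      norm_num

theorem stmt14 (n : ℕ) (hn : 0 < n) (β : ℝ) (hβ : 0 < β)
    (s : ℕ → (Fin n → ℂ))
    (hs0 : s 0 = (-(((n : ℂ) + 1) / 2)) • (AmatC n)⁻¹.mulVec (evecC n))
    (hsk : ∀ k : ℕ, 1 ≤ k →
      s k = Complex.I •
        (((k : ℂ) • (1 : Matrix (Fin n) (Fin n) ℂ) - ((4 / β : ℝ) : ℂ) • AmatC n)⁻¹).mulVec
          ((BmatC n).mulVec (s (k - 1)))) :
    (∀ k : ℕ, 1 ≤ k →
        IsUnit ((k : ℂ) • (1 : Matrix (Fin n) (Fin n) ℂ) - ((4 / β : ℝ) : ℂ) • AmatC n))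
      ∧ s 0 = (fun _ => 1)
      ∧ (∃ κ > (0 : ℝ), ∀ k : ℕ,
          ‖s k‖ ≤ κ ^ k * ∏ j ∈ Finset.Icc 1 k, (n : ℝ) / ((j : ℝ) + 4 * n / β))
      ∧ ∀ lam : ℂ, Summable (fun k : ℕ => ‖s k‖ * ‖lam‖ ^ k) := by
  have hc'pos : (0:ℝ) < 4 / β := by positivity
  have hcast : ∀ k : ℕ, ((k:ℂ) • (1 : Matrix (Fin n) (Fin n) ℂ) - ((4/β : ℝ):ℂ) • AmatC n)
      = (((k:ℝ):ℂ) • (1 : Matrix (Fin n) (Fin n) ℂ) - (((4/β : ℝ)):ℂ) • AmatC n) := by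
    intro k; norm_num
  -- Part 1
  have part1 : ∀ k : ℕ, 1 ≤ k →
      IsUnit ((k:ℂ) • (1 : Matrix (Fin n) (Fin n) ℂ) - ((4/β : ℝ):ℂ) • AmatC n) := by
    intro k hk
    rw [hcast k]
    refine (Matrix.isUnit_iff_isUnit_det _).mpr (isUnit_iff_ne_zero.mpr ?_)
    exact det_ne n hn (k:ℝ) (4/β) (Nat.cast_nonneg k) hc'pos
  -- invertibility of A
  have hdetA : (AmatC n).det ≠ 0 := by
    have h := det_ne n hn 0 1 le_rfl one_pos
    have heq : (((0:ℝ):ℂ) • (1 : Matrix (Fin n) (Fin n) ℂ) - ((1:ℝ):ℂ) • AmatC n)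
        = -AmatC n := by norm_num
    rw [heq, Matrix.det_neg] at h
    intro h0; apply h; rw [h0, mul_zero]
  -- Part 2
  have hones : s 0 = (fun _ => 1) := by
    have h1 : (AmatC n)⁻¹.mulVec ((AmatC n).mulVec (fun _ => 1)) = (fun _ => 1) := by
      rw [Matrix.mulVec_mulVec, Matrix.nonsing_inv_mul _ (isUnit_iff_ne_zero.mpr hdetA),
        Matrix.one_mulVec]
    rw [amat_ones n hn] at h1
    rw [Matrix.mulVec_smul] at h1
    rw [hs0, h1]
  -- recursion bound in the weighted norm
  have hNs : ∀ k : ℕ, Nw n (s k) ≤ Nw n (s 0) * ∏ j ∈ Icc 1 k, ((n:ℝ) / ((j:ℝ) + 4/β)) := by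
    intro k
    induction k with
    | zero => simp
    | succ k ih =>
      have hrec := hsk (k+1) (Nat.succ_le_succ (Nat.zero_le k))
      simp only [Nat.add_sub_cancel] at hrec
      set Mk : Matrix (Fin n) (Fin n) ℂ :=
        (((k+1:ℕ)):ℂ) • (1 : Matrix (Fin n) (Fin n) ℂ) - ((4/β : ℝ):ℂ) • AmatC n with hMk
      have hdet : IsUnit Mk.det := by
        refine isUnit_iff_ne_zero.mpr ?_
        rw [hMk, hcast (k+1)]
        exact det_ne n hn ((k+1:ℕ):ℝ) (4/β) (Nat.cast_nonneg _) hc'pos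
      set y : Fin n → ℂ := (BmatC n).mulVec (s k) with hy
      set x : Fin n → ℂ := Mk⁻¹.mulVec y with hx
      have hMx : Mk.mulVec x = y := by
        rw [hx, Matrix.mulVec_mulVec, Matrix.mul_nonsing_inv _ hdet, Matrix.one_mulVec]
      have hb := norm_bound n hn ((k+1:ℕ):ℝ) (4/β) (Nat.cast_nonneg _) hc'pos x
      rw [← hcast (k+1), ← hMk, hMx] at hb
      have hby : Nw n y ≤ n * Nw n (s k) := B_bound n (s k)
      have hpos : (0:ℝ) < ((k+1:ℕ):ℝ) + 4/β := by positivity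
      have hxle : Nw n x ≤ ((n:ℝ) / (((k+1:ℕ):ℝ) + 4/β)) * Nw n (s k) := by
        rw [div_mul_eq_mul_div, le_div_iff₀ hpos]
        calc Nw n x * (((k+1:ℕ):ℝ) + 4/β) = (((k+1:ℕ):ℝ) + 4/β) * Nw n x := mul_comm _ _
          _ ≤ Nw n y := hb
          _ ≤ (n:ℝ) * Nw n (s k) := hby
      have hstep : Nw n (s (k+1)) ≤ ((n:ℝ) / (((k+1:ℕ):ℝ) + 4/β)) * Nw n (s k) := by
        rw [hrec, Nw_smul_I]
        exact hxle
      have hfrac : (0:ℝ) ≤ (n:ℝ) / (((k+1:ℕ):ℝ) + 4/β) := by positivity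
      calc Nw n (s (k+1)) ≤ ((n:ℝ) / (((k+1:ℕ):ℝ) + 4/β)) * Nw n (s k) := hstep
        _ ≤ ((n:ℝ) / (((k+1:ℕ):ℝ) + 4/β))
            * (Nw n (s 0) * ∏ j ∈ Icc 1 k, ((n:ℝ) / ((j:ℝ) + 4/β))) :=
          mul_le_mul_of_nonneg_left ih hfrac
        _ = Nw n (s 0) * ∏ j ∈ Icc 1 (k+1), ((n:ℝ) / ((j:ℝ) + 4/β)) := by
          rw [Finset.prod_Icc_succ_top (Nat.succ_le_succ (Nat.zero_le k))]
          push_cast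
          ring
  -- constants
  set Cw : ℝ := (univ : Finset (Fin n)).sup' (univ_nonempty_iff.mpr ⟨⟨0, hn⟩⟩)
      (fun i => (Real.sqrt (wt n i))⁻¹) with hCw
  have hCw0 : 0 ≤ Cw := by
    refine le_trans ?_ (Finset.le_sup' (fun i : Fin n => (Real.sqrt (wt n (i:ℕ)))⁻¹)
      (Finset.mem_univ ⟨0, hn⟩))
    positivity
  set N0 : ℝ := Nw n (s 0) with hN0def
  have hN00 : 0 ≤ N0 := Nw_nonneg n (s 0)
  have hn1 : (1:ℝ) ≤ (n:ℝ) := by exact_mod_cast hn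
  obtain ⟨κ, hκ⟩ : ∃ x : ℝ, x = (n:ℝ) * (Cw * N0 + 1) := ⟨_, rfl⟩
  have hκpos : 0 < κ := by
    have h1 : (0:ℝ) < n := by linarith
    have h2 : (0:ℝ) < Cw * N0 + 1 := by nlinarith
    rw [hκ]; exact mul_pos h1 h2
  -- product comparison
  have hprodle : ∀ k : ℕ, (∏ j ∈ Icc 1 k, ((n:ℝ) / ((j:ℝ) + 4/β)))
      ≤ (n:ℝ)^k * ∏ j ∈ Icc 1 k, ((n:ℝ) / ((j:ℝ) + 4*(n:ℝ)/β)) := by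
    intro k
    have h1 : (∏ j ∈ Icc 1 k, ((n:ℝ) / ((j:ℝ) + 4/β)))
        ≤ ∏ j ∈ Icc 1 k, ((n:ℝ) * ((n:ℝ) / ((j:ℝ) + 4*(n:ℝ)/β))) := by
      refine Finset.prod_le_prod (fun j _ => by positivity) (fun j hj => ?_)
      have hj1 : 1 ≤ j := (Finset.mem_Icc.mp hj).1
      have hj1' : (1:ℝ) ≤ (j:ℝ) := by exact_mod_cast hj1
      have hd1 : (0:ℝ) < (j:ℝ) + 4/β := by positivity
      have hd2 : (0:ℝ) < (j:ℝ) + 4*(n:ℝ)/β := by positivity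
      rw [← mul_div_assoc, div_le_div_iff₀ hd1 hd2]
      have e1 : (n:ℝ) * ((j:ℝ) + 4*(n:ℝ)/β) = (n:ℝ)*(j:ℝ) + (n:ℝ)*(n:ℝ)*(4/β) := by ring
      have e2 : (n:ℝ)*(n:ℝ) * ((j:ℝ) + 4/β) = (n:ℝ)*(n:ℝ)*(j:ℝ) + (n:ℝ)*(n:ℝ)*(4/β) := by ring
      have e3 : (n:ℝ)*(j:ℝ) ≤ (n:ℝ)*(n:ℝ)*(j:ℝ) := by
        nlinarith [mul_nonneg (mul_nonneg (le_trans zero_le_one hn1) (sub_nonneg.mpr hn1))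
          (le_trans zero_le_one hj1')]
      linarith
    calc (∏ j ∈ Icc 1 k, ((n:ℝ) / ((j:ℝ) + 4/β)))
        ≤ ∏ j ∈ Icc 1 k, ((n:ℝ) * ((n:ℝ) / ((j:ℝ) + 4*(n:ℝ)/β))) := h1
      _ = (n:ℝ)^k * ∏ j ∈ Icc 1 k, ((n:ℝ) / ((j:ℝ) + 4*(n:ℝ)/β)) := by
        rw [Finset.prod_mul_distrib, Finset.prod_const, Nat.card_Icc]
        simp
  -- Part 3
  have part3 : ∀ k : ℕ, ‖s k‖ ≤ κ ^ k * ∏ j ∈ Icc 1 k, ((n:ℝ) / ((j:ℝ) + 4*(n:ℝ)/β)) := by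
    intro k
    rcases Nat.eq_zero_or_pos k with hk0 | hk0
    · subst hk0
      have hnorm1 : ‖s 0‖ = 1 := by
        rw [hones]
        haveI : Nonempty (Fin n) := ⟨⟨0, hn⟩⟩
        rw [pi_norm_const (1:ℂ)]
        simp
      simp [hnorm1]
    · have hk0' : k ≠ 0 := by omega
      have c1 : ‖s k‖ ≤ Cw * Nw n (s k) := sup_le_Nw n hn (s k)
      have c2 : Cw * Nw n (s k) ≤ Cw * (N0 * ∏ j ∈ Icc 1 k, ((n:ℝ) / ((j:ℝ) + 4/β))) :=
        mul_le_mul_of_nonneg_left (hNs k) hCw0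
      have hP0 : (0:ℝ) ≤ ∏ j ∈ Icc 1 k, ((n:ℝ) / ((j:ℝ) + 4*(n:ℝ)/β)) :=
        Finset.prod_nonneg fun j _ => by positivity
      have c3 : Cw * (N0 * ∏ j ∈ Icc 1 k, ((n:ℝ) / ((j:ℝ) + 4/β)))
          ≤ Cw * N0 * ((n:ℝ)^k * ∏ j ∈ Icc 1 k, ((n:ℝ) / ((j:ℝ) + 4*(n:ℝ)/β))) := by
        rw [← mul_assoc]
        exact mul_le_mul_of_nonneg_left (hprodle k) (mul_nonneg hCw0 hN00)
      have c4 : Cw * N0 * ((n:ℝ)^k * ∏ j ∈ Icc 1 k, ((n:ℝ) / ((j:ℝ) + 4*(n:ℝ)/β)))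
          ≤ κ ^ k * ∏ j ∈ Icc 1 k, ((n:ℝ) / ((j:ℝ) + 4*(n:ℝ)/β)) := by
        have h5 : Cw * N0 * (n:ℝ)^k ≤ κ ^ k := by
          rw [hκ, mul_pow]
          have h6 : Cw * N0 + 1 ≤ (Cw * N0 + 1)^k :=
            le_self_pow₀ (by nlinarith) hk0'
          have h7 : (0:ℝ) ≤ (n:ℝ)^k := by positivity
          calc Cw * N0 * (n:ℝ)^k ≤ (Cw * N0 + 1) * (n:ℝ)^k := by nlinarith
            _ ≤ (Cw * N0 + 1)^k * (n:ℝ)^k := mul_le_mul_of_nonneg_right h6 h7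
            _ = (n:ℝ)^k * (Cw * N0 + 1)^k := mul_comm _ _
        calc Cw * N0 * ((n:ℝ)^k * ∏ j ∈ Icc 1 k, ((n:ℝ) / ((j:ℝ) + 4*(n:ℝ)/β)))
            = (Cw * N0 * (n:ℝ)^k) * ∏ j ∈ Icc 1 k, ((n:ℝ) / ((j:ℝ) + 4*(n:ℝ)/β)) := by ring
          _ ≤ κ ^ k * ∏ j ∈ Icc 1 k, ((n:ℝ) / ((j:ℝ) + 4*(n:ℝ)/β)) :=
            mul_le_mul_of_nonneg_right h5 hP0
      exact le_trans c1 (le_trans c2 (le_trans c3 c4))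
  -- Part 4
  have part4 : ∀ lam : ℂ, Summable (fun k : ℕ => ‖s k‖ * ‖lam‖ ^ k) := by
    intro lam
    have hPfac : ∀ k : ℕ, (∏ j ∈ Icc 1 k, ((n:ℝ) / ((j:ℝ) + 4*(n:ℝ)/β)))
        ≤ (n:ℝ)^k / (Nat.factorial k : ℝ) := by
      intro k
      have h1 : (∏ j ∈ Icc 1 k, ((n:ℝ) / ((j:ℝ) + 4*(n:ℝ)/β)))
          ≤ ∏ j ∈ Icc 1 k, ((n:ℝ) / (j:ℝ)) := by
        refine Finset.prod_le_prod (fun j _ => by positivity) (fun j hj => ?_)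
        have hj1 : 1 ≤ j := (Finset.mem_Icc.mp hj).1
        have hj1' : (0:ℝ) < (j:ℝ) := by exact_mod_cast hj1
        exact div_le_div_of_nonneg_left (by positivity) hj1'
          (le_add_of_nonneg_right (by positivity))
      have h2 : (∏ j ∈ Icc 1 k, ((n:ℝ) / (j:ℝ))) = (n:ℝ)^k / (Nat.factorial k : ℝ) := by
        rw [Finset.prod_div_distrib, Finset.prod_const, Nat.card_Icc]
        have h3 : (∏ j ∈ Icc 1 k, (j:ℝ)) = (Nat.factorial k : ℝ) := by
          rw [← Nat.cast_prod]
          congr 1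
          rw [← Finset.prod_Ico_id_eq_factorial, Finset.Ico_add_one_right_eq_Icc]
        rw [h3]
        simp
      linarith
    refine Summable.of_nonneg_of_le (fun k => by positivity) (fun k => ?_)
      (Real.summable_pow_div_factorial (κ * (n:ℝ) * (‖lam‖ + 1)))
    have hP0 : (0:ℝ) ≤ ∏ j ∈ Icc 1 k, ((n:ℝ) / ((j:ℝ) + 4*(n:ℝ)/β)) :=
      Finset.prod_nonneg fun j _ => by positivity
    have b1 : ‖s k‖ * ‖lam‖ ^ k
        ≤ (κ ^ k * ∏ j ∈ Icc 1 k, ((n:ℝ) / ((j:ℝ) + 4*(n:ℝ)/β))) * ‖lam‖ ^ k :=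
      mul_le_mul_of_nonneg_right (part3 k) (by positivity)
    have b2 : (κ ^ k * ∏ j ∈ Icc 1 k, ((n:ℝ) / ((j:ℝ) + 4*(n:ℝ)/β))) * ‖lam‖ ^ k
        ≤ (κ ^ k * ((n:ℝ)^k / (Nat.factorial k : ℝ))) * (‖lam‖ + 1) ^ k := by
      have hκk : (0:ℝ) ≤ κ ^ k := by positivity
      have hl : ‖lam‖ ^ k ≤ (‖lam‖ + 1) ^ k :=
        pow_le_pow_left₀ (norm_nonneg lam) (by linarith [norm_nonneg lam]) k
      have hm1 : κ ^ k * ∏ j ∈ Icc 1 k, ((n:ℝ) / ((j:ℝ) + 4*(n:ℝ)/β))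
          ≤ κ ^ k * ((n:ℝ)^k / (Nat.factorial k : ℝ)) :=
        mul_le_mul_of_nonneg_left (hPfac k) hκk
      exact mul_le_mul hm1 hl (by positivity) (by positivity)
    have b3 : (κ ^ k * ((n:ℝ)^k / (Nat.factorial k : ℝ))) * (‖lam‖ + 1) ^ k
        = (κ * (n:ℝ) * (‖lam‖ + 1)) ^ k / (Nat.factorial k : ℝ) := by
      rw [mul_pow, mul_pow]
      ring
    calc ‖s k‖ * ‖lam‖ ^ k ≤ _ := b1
      _ ≤ _ := b2
      _ = _ := b3
  -- conclusion
  have hprodsame : ∀ k : ℕ, (∏ j ∈ Icc 1 k, ((n:ℝ) / ((j:ℝ) + 4*(n:ℝ)/β)))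
      = ∏ j ∈ Finset.Icc 1 k, (n : ℝ) / ((j : ℝ) + 4 * n / β) := fun k => rfl
  exact ⟨part1, hones, ⟨κ, hκpos, fun k => by rw [← hprodsame k]; exact part3 k⟩, part4⟩
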